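/- Let a₁, a₂ ∈ K with v_K(a₁) = v_K(a₂) = −1, and for i = 1, 2 let Lᵢ = K(xᵢ) where xᵢ is a root of X^p − X − aᵢ in a fixed algebraic closure of K, and suppose each Lᵢ/K is cyclic of degree p. If v_K(a₁ − a₂) ≥ 1, then L₁ = L₂ (as subfields of the fixed algebraic closure); in particular L₁ contains a root of X^p − X − a₂. -/

import Mathlib

open Polynomial

universe u v w

/-- An additive `ℚ`-valued valuation on a field `K`, specified by its values on the
nonzero elements (the value at `0` is irrelevant and unconstrained). -/
structure AddVal (K : Type u) [Field K] where
  v : K → ℚ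
  v_mul : ∀ x y : K, x ≠ 0 → y ≠ 0 → v (x * y) = v x + v y
  v_add : ∀ x y : K, x ≠ 0 → y ≠ 0 → x + y ≠ 0 → min (v x) (v y) ≤ v (x + y)

namespace AddVal

variable {K : Type u} [Field K]

/-- The value group of the valuation is exactly `(1/e)·ℤ`.  (For `e = 1` this says the
valuation is a normalized discrete valuation; for an extension of a normalized base field
it says the ramification index is `e`.) -/
def HasIndex (V : AddVal K) (e : ℕ) : Prop :=
  (∀ x : K, x ≠ 0 → ∃ n : ℤ, V.v x = (n : ℚ) / (e : ℚ)) ∧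
    ∃ x : K, x ≠ 0 ∧ V.v x = 1 / (e : ℚ)

/-- Completeness: every Cauchy sequence for the valuation converges. -/
def IsComplete (V : AddVal K) : Prop :=
  ∀ f : ℕ → K,
    (∀ C : ℚ, ∃ N : ℕ, ∀ m n : ℕ, N ≤ m → N ≤ n → f m = f n ∨ C ≤ V.v (f m - f n)) →
      ∃ a : K, ∀ C : ℚ, ∃ N : ℕ, ∀ n : ℕ, N ≤ n → f n = a ∨ C ≤ V.v (f n - a)

/-- `x` lies in the valuation ring `O_K`. -/
def Integer (V : AddVal K) (x : K) : Prop := x = 0 ∨ 0 ≤ V.v x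

end AddVal

/-- Data exhibiting the field `k` as the residue field of `(K, V)`: a reduction map `ρ`,
additive and multiplicative on the valuation ring, surjective onto `k`, and whose kernel
(on the valuation ring) is exactly the maximal ideal `{x : v x ≥ 1}`. -/
structure ResidueData {K : Type u} [Field K] (V : AddVal K) (k : Type v) [Field k] where
  ρ : K → k
  ρ_one : ρ 1 = 1
  ρ_add : ∀ x y : K, V.Integer x → V.Integer y → ρ (x + y) = ρ x + ρ y
  ρ_mul : ∀ x y : K, V.Integer x → V.Integer y → ρ (x * y) = ρ x * ρ y
  ρ_surj : ∀ c : k, ∃ x : K, V.Integer x ∧ ρ x = c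
  ρ_zero : ∀ x : K, V.Integer x → (ρ x = 0 ↔ x = 0 ∨ 1 ≤ V.v x)

/-- A finite extension `L` of a complete discretely valued field `(K, V)` (with `V`
normalized, i.e. of value group `ℤ`) is totally ramified iff the (unique) extension of
the valuation to `L` has value group `(1/[L:K])·ℤ`. -/
def IsTotallyRamifiedExt (K : Type u) (L : Type w) [Field K] [Field L] [Algebra K L]
    (V : AddVal K) : Prop :=
  ∃ W : AddVal L, (∀ x : K, x ≠ 0 → W.v (algebraMap K L x) = V.v x) ∧
    W.HasIndex (Module.finrank K L)

/-- Data exhibiting the residue field extension attached to an extension `L/K` of valued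
fields together with residue fields `k` of `K` and `l` of `L` and the induced embedding
`σ : k → l`; the field `sep` states that the residue extension `l/k` is separable
(every element of `l` is a root of a separable polynomial over `k`). -/
structure SeparableResidueExtension {K : Type u} {L : Type w} [Field K] [Field L]
    [Algebra K L] {k : Type v} [Field k] (V : AddVal K) (Rk : ResidueData V k)
    (W : AddVal L) : Type (max u (v + 1) w) where
  l : Type v
  [fl : Field l]
  Rl : ResidueData W l
  σ : k →+* l
  compat : ∀ x : K, V.Integer x → σ (Rk.ρ x) = Rl.ρ (algebraMap K L x)
  sep : ∀ c : l, ∃ f : Polynomial k, f ≠ 0 ∧ f.Separable ∧ Polynomial.eval₂ σ c f = 0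

/-- An extension `L` of a complete absolutely unramified discretely valued field `(K, V)`
(with residue field `(k, Rk)`) is unramified iff the (unique) extension of the valuation
to `L` still has value group `ℤ` and the residue field extension is separable. -/
def IsUnramifiedExt (K : Type u) (L : Type w) [Field K] [Field L] [Algebra K L]
    (V : AddVal K) {k : Type v} [Field k] (Rk : ResidueData V k) : Prop :=
  ∃ W : AddVal L, (∀ x : K, x ≠ 0 → W.v (algebraMap K L x) = V.v x) ∧
    W.HasIndex 1 ∧ Nonempty (SeparableResidueExtension V Rk W)

namespace S1Aux

variable {K : Type u} [Field K] (V : AddVal K)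

theorem v_one : V.v 1 = 0 := by
  have := V.v_mul 1 1 one_ne_zero one_ne_zero
  rw [mul_one] at this; linarith

theorem v_neg {x : K} (hx : x ≠ 0) : V.v (-x) = V.v x := by
  have h1 := V.v_mul (-1) (-1) (by norm_num) (by norm_num)
  rw [neg_one_mul, neg_neg, v_one V] at h1
  have h2 := V.v_mul (-1) x (by norm_num) hx
  rw [neg_one_mul] at h2
  rw [h2]; linarith

theorem v_inv {x : K} (hx : x ≠ 0) : V.v x⁻¹ = -V.v x := by
  have := V.v_mul x x⁻¹ hx (inv_ne_zero hx)
  rw [mul_inv_cancel₀ hx, v_one V] at this; linarith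

theorem v_div {x y : K} (hx : x ≠ 0) (hy : y ≠ 0) : V.v (x / y) = V.v x - V.v y := by
  rw [div_eq_mul_inv, V.v_mul x y⁻¹ hx (inv_ne_zero hy), v_inv V hy]; ring

theorem v_pow {x : K} (hx : x ≠ 0) (n : ℕ) : V.v (x ^ n) = n * V.v x := by
  induction n with
  | zero => simpa using v_one V
  | succ n ih =>
      rw [pow_succ, V.v_mul _ _ (pow_ne_zero n hx) hx, ih]
      push_cast; ring

theorem v_add_left {x y : K} (hx : x ≠ 0) (hy : y = 0 ∨ V.v x < V.v y) :
    x + y ≠ 0 ∧ V.v (x + y) = V.v x := by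
  by_cases hy0 : y = 0
  · rw [hy0, add_zero]; exact ⟨hx, rfl⟩
  have hlt : V.v x < V.v y := hy.resolve_left hy0
  have hne : x + y ≠ 0 := by
    intro h
    have : y = -x := by linear_combination h
    rw [this, v_neg V hx] at hlt
    exact lt_irrefl _ hlt
  refine ⟨hne, le_antisymm ?_ ?_⟩
  · have h2 := V.v_add (x + y) (-y) hne (neg_ne_zero.2 hy0) (by simpa using hx)
    rw [add_neg_cancel_right, v_neg V hy0] at h2
    rcases min_le_iff.1 h2 with h | h
    · exact h
    · linarith
  · have h1 := V.v_add x y hx hy0 hne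
    exact le_trans (le_min le_rfl (le_of_lt hlt)) h1

theorem v_sum {L : Type w} [Field L] (wv : L → ℚ)
    (hadd : ∀ x y : L, x ≠ 0 → y ≠ 0 → x + y ≠ 0 → min (wv x) (wv y) ≤ wv (x + y))
    {ι : Type v} (s : Finset ι) (f : ι → L) (C : ℚ)
    (h : ∀ i ∈ s, f i = 0 ∨ C ≤ wv (f i)) :
    (∑ i ∈ s, f i) = 0 ∨ C ≤ wv (∑ i ∈ s, f i) := by
  classical
  induction s using Finset.induction_on with
  | empty => simp
  | @insert a s ha ih =>
      rw [Finset.sum_insert ha]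
      by_cases ha0 : f a = 0
      · rw [ha0, zero_add]
        exact ih fun i hi => h i (Finset.mem_insert_of_mem hi)
      have hCa : C ≤ wv (f a) := (h a (Finset.mem_insert_self a s)).resolve_left ha0
      by_cases hs0 : (∑ i ∈ s, f i) = 0
      · rw [hs0, add_zero]; exact Or.inr hCa
      have hCs : C ≤ wv (∑ i ∈ s, f i) :=
        (ih fun i hi => h i (Finset.mem_insert_of_mem hi)).resolve_left hs0
      by_cases hsum : f a + ∑ i ∈ s, f i = 0
      · exact Or.inl hsum
      · exact Or.inr (le_trans (le_min hCa hCs) (hadd _ _ ha0 hs0 hsum))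

theorem v_natCast [CharZero K] (n : ℕ) (hn : n ≠ 0) : 0 ≤ V.v (n : K) := by
  have : ((n : K)) = ∑ _i ∈ Finset.range n, (1 : K) := by simp
  rw [this]
  rcases v_sum V.v V.v_add (Finset.range n) (fun _ => (1:K)) 0
      (fun i _ => Or.inr (le_of_eq (v_one V).symm)) with h | h
  · exfalso; rw [← this] at h; exact hn (Nat.cast_eq_zero.1 h)
  · exact h

end S1Aux

namespace S1Aux

section W

variable {K : Type u} {L : Type w} [Field K] [Field L] [Algebra K L]
variable (V : AddVal K) {p : ℕ} (bb : Module.Basis (Fin p) K L)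

noncomputable def wv (z : L) : ℚ :=
  if h : (bb.repr z).support.Nonempty then
    (bb.repr z).support.inf' h fun i => V.v (bb.repr z i) - (i : ℕ) / p
  else 0

theorem wv_le {z : L} {i : Fin p} (hi : bb.repr z i ≠ 0) :
    wv V bb z ≤ V.v (bb.repr z i) - (i : ℕ) / p := by
  have hne : (bb.repr z).support.Nonempty := ⟨i, Finsupp.mem_support_iff.2 hi⟩
  rw [wv, dif_pos hne]
  exact Finset.inf'_le _ (Finsupp.mem_support_iff.2 hi)

theorem wv_exists {z : L} (hz : z ≠ 0) :
    ∃ i : Fin p, bb.repr z i ≠ 0 ∧ wv V bb z = V.v (bb.repr z i) - (i : ℕ) / p := by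
  have hne : (bb.repr z).support.Nonempty := by
    rw [Finsupp.support_nonempty_iff]
    exact fun h => hz (by simpa using congrArg bb.repr.symm h)
  rw [wv, dif_pos hne]
  obtain ⟨i, hi, hmin⟩ := Finset.exists_mem_eq_inf' hne
    (fun i => V.v (bb.repr z i) - (i : ℕ) / p)
  exact ⟨i, Finsupp.mem_support_iff.1 hi, hmin⟩

theorem wv_add {x y : L} (hx : x ≠ 0) (hy : y ≠ 0) (hxy : x + y ≠ 0) :
    min (wv V bb x) (wv V bb y) ≤ wv V bb (x + y) := by
  obtain ⟨i, hi, heq⟩ := wv_exists V bb hxy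
  rw [heq]
  have hrepr : bb.repr (x + y) i = bb.repr x i + bb.repr y i := by simp
  by_cases hxi : bb.repr x i = 0
  · have hyi : bb.repr y i ≠ 0 := by
      intro h; rw [hrepr, hxi, h, add_zero] at hi; exact hi rfl
    have : bb.repr (x + y) i = bb.repr y i := by rw [hrepr, hxi, zero_add]
    rw [this]
    exact le_trans (min_le_right _ _) (wv_le V bb hyi)
  by_cases hyi : bb.repr y i = 0
  · have : bb.repr (x + y) i = bb.repr x i := by rw [hrepr, hyi, add_zero]
    rw [this]
    exact le_trans (min_le_left _ _) (wv_le V bb hxi)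
  have hsum : bb.repr x i + bb.repr y i ≠ 0 := by rw [← hrepr]; exact hi
  have hmin := V.v_add _ _ hxi hyi hsum
  rw [← hrepr] at hmin
  have h1 := wv_le V bb hxi
  have h2 := wv_le V bb hyi
  rcases min_le_iff.1 hmin with h | h
  · exact le_trans (min_le_left _ _) (by linarith)
  · exact le_trans (min_le_right _ _) (by linarith)

theorem wv_smul {c : K} {z : L} (hc : c ≠ 0) (hz : z ≠ 0) :
    wv V bb (c • z) = V.v c + wv V bb z := by
  have hcz : c • z ≠ 0 := smul_ne_zero hc hz
  have hrepr : ∀ i, bb.repr (c • z) i = c * bb.repr z i := by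
    intro i; rw [map_smul]; rfl
  refine le_antisymm ?_ ?_
  · obtain ⟨i, hi, heq⟩ := wv_exists V bb hz
    have hci : bb.repr (c • z) i ≠ 0 := by rw [hrepr]; exact mul_ne_zero hc hi
    have := wv_le V bb hci
    rw [hrepr, V.v_mul c _ hc hi] at this
    linarith
  · obtain ⟨j, hj, heq⟩ := wv_exists V bb hcz
    rw [hrepr] at hj heq
    have hzj : bb.repr z j ≠ 0 := fun h => hj (by rw [h, mul_zero])
    rw [V.v_mul c _ hc hzj] at heq
    have := wv_le V bb hzj
    linarith

theorem wv_neg {z : L} (hz : z ≠ 0) : wv V bb (-z) = wv V bb z := by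
  have h1 : ((-1 : K)) • z = -z := by simp
  rw [← h1, wv_smul V bb (by norm_num : (-1:K) ≠ 0) hz, v_neg V one_ne_zero, v_one V]
  ring

theorem wv_add_left {x y : L} (hx : x ≠ 0) (hy : y = 0 ∨ wv V bb x < wv V bb y) :
    x + y ≠ 0 ∧ wv V bb (x + y) = wv V bb x := by
  by_cases hy0 : y = 0
  · rw [hy0, add_zero]; exact ⟨hx, rfl⟩
  have hlt : wv V bb x < wv V bb y := hy.resolve_left hy0
  have hne : x + y ≠ 0 := by
    intro h
    have : y = -x := by linear_combination h
    rw [this, wv_neg V bb hx] at hlt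
    exact lt_irrefl _ hlt
  refine ⟨hne, le_antisymm ?_ ?_⟩
  · have h2 := wv_add V bb hne (neg_ne_zero.2 hy0) (by simpa using hx)
    rw [add_neg_cancel_right, wv_neg V bb hy0] at h2
    rcases min_le_iff.1 h2 with h | h
    · exact h
    · linarith
  · exact le_trans (le_min le_rfl (le_of_lt hlt)) (wv_add V bb hx hy0 hne)

theorem wv_basis (i : Fin p) : wv V bb (bb i) = -(((i : ℕ) : ℚ) / p) := by
  obtain ⟨j, hj, heq⟩ := wv_exists V bb (bb.ne_zero i)
  have hji : j = i := by
    by_contra h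
    rw [Module.Basis.repr_self, Finsupp.single_apply, if_neg (fun hh => h hh.symm)] at hj
    exact hj rfl
  subst hji
  rw [Module.Basis.repr_self, Finsupp.single_apply, if_pos rfl] at heq
  rw [heq, v_one V]; ring

theorem wv_smul_basis {c : K} (hc : c ≠ 0) (i : Fin p) :
    wv V bb (c • bb i) = V.v c - (i : ℕ) / p := by
  rw [wv_smul V bb hc (bb.ne_zero i), wv_basis V bb i]; ring

theorem wv_distinct (hdisc : V.HasIndex 1) {c d : K} (hc : c ≠ 0) (hd : d ≠ 0)
    {i j : Fin p} (hij : i ≠ j) :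
    V.v c - (i : ℕ) / p ≠ V.v d - (j : ℕ) / p := by
  have hp0 : 0 < p := Fin.pos i
  obtain ⟨m, hm⟩ := hdisc.1 c hc
  obtain ⟨n, hn⟩ := hdisc.1 d hd
  intro h
  rw [hm, hn] at h
  have hp0' : (0 : ℚ) < (p : ℚ) := by exact_mod_cast hp0
  have hij' : ((i : ℕ) : ℚ) ≠ ((j : ℕ) : ℚ) := by
    intro hh
    exact hij (Fin.ext (by exact_mod_cast hh))
  have hd0 : (m - n : ℤ) ≠ 0 := by
    intro h0
    have hmn : (m : ℚ) = (n : ℚ) := by exact_mod_cast (by omega : m = n)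
    refine hij' ?_
    have h' : (m : ℚ) / 1 - (i : ℕ) / p = (n : ℚ) / 1 - (j : ℕ) / p := h
    field_simp at h'
    have hmp : (m : ℚ) * p = (n : ℚ) * p := by rw [hmn]
    linarith
  have h1 : (1 : ℚ) ≤ |((m - n : ℤ) : ℚ)| := by
    exact_mod_cast Int.one_le_abs hd0
  have hkey : ((m - n : ℤ) : ℚ) * p = ((i : ℕ) : ℚ) - ((j : ℕ) : ℚ) := by
    have h' : (m : ℚ) / 1 - (i : ℕ) / p = (n : ℚ) / 1 - (j : ℕ) / p := h
    field_simp at h'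
    push_cast
    linarith
  have hi' : ((i : ℕ) : ℚ) < p := by exact_mod_cast i.isLt
  have hj' : ((j : ℕ) : ℚ) < p := by exact_mod_cast j.isLt
  have hi0 : (0 : ℚ) ≤ ((i : ℕ) : ℚ) := by positivity
  have hj0 : (0 : ℚ) ≤ ((j : ℕ) : ℚ) := by positivity
  have habs : |((m - n : ℤ) : ℚ) * p| = |((m - n : ℤ) : ℚ)| * p := by
    rw [abs_mul, abs_of_pos hp0']
  have h2 : (p : ℚ) ≤ |((m - n : ℤ) : ℚ) * p| := by
    rw [habs]; nlinarith
  rw [hkey] at h2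
  rcases abs_cases (((i : ℕ) : ℚ) - ((j : ℕ) : ℚ)) with ⟨he, _⟩ | ⟨he, _⟩ <;> linarith

theorem wv_decomp (hdisc : V.HasIndex 1) {z : L} (hz : z ≠ 0) :
    ∃ (i : Fin p) (c : K), c ≠ 0 ∧ wv V bb z = V.v c - (i : ℕ) / p ∧
      (z - c • bb i = 0 ∨ (z - c • bb i ≠ 0 ∧ wv V bb z < wv V bb (z - c • bb i))) := by
  obtain ⟨i, hi, heq⟩ := wv_exists V bb hz
  refine ⟨i, bb.repr z i, hi, heq, ?_⟩
  set z' := z - bb.repr z i • bb i with hz'def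
  by_cases hz' : z' = 0
  · exact Or.inl hz'
  refine Or.inr ⟨hz', ?_⟩
  have hrepr' : ∀ k, bb.repr z' k = bb.repr z k - (if i = k then bb.repr z i else 0) := by
    intro k
    rw [hz'def, map_sub, map_smul, Module.Basis.repr_self]
    simp [Finsupp.single_apply]
  obtain ⟨j, hj, heq'⟩ := wv_exists V bb hz'
  have hji : j ≠ i := by
    intro h
    rw [h, hrepr' i, if_pos rfl, sub_self] at hj
    exact hj rfl
  have hjz : bb.repr z' j = bb.repr z j := by
    rw [hrepr' j, if_neg (fun hh => hji hh.symm), sub_zero]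
  have hzj : bb.repr z j ≠ 0 := by rw [← hjz]; exact hj
  rw [heq', hjz]
  rcases lt_or_eq_of_le (wv_le V bb hzj) with h | h
  · exact h
  · exact absurd (heq.symm.trans h) (wv_distinct V hdisc hi hzj (fun hh => hji hh.symm))

variable {g : L} {a₁ : K}

theorem wv_gpow (hp2 : 2 ≤ p) (hbb : ∀ i : Fin p, bb i = g ^ (i : ℕ))
    (hg : g ^ p - g = algebraMap K L a₁) (ha₁ : V.v a₁ = -1) (ha₁0 : a₁ ≠ 0)
    {m : ℕ} (hm : m ≤ 2 * p - 2) :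
    g ^ m ≠ 0 ∧ wv V bb (g ^ m) = -((m : ℚ) / p) := by
  by_cases hmp : m < p
  · have hbm : bb ⟨m, hmp⟩ = g ^ m := hbb ⟨m, hmp⟩
    constructor
    · rw [← hbm]; exact bb.ne_zero _
    · rw [← hbm, wv_basis V bb]
  · push_neg at hmp
    obtain ⟨k, rfl⟩ : ∃ k, m = k + p := ⟨m - p, by omega⟩
    have hk2 : k + 2 ≤ p := by omega
    have hgp : g ^ p = algebraMap K L a₁ + g := by linear_combination hg
    have hsplit : g ^ (k + p) = a₁ • bb ⟨k, by omega⟩ + bb ⟨k + 1, by omega⟩ := by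
      rw [hbb ⟨k, by omega⟩, hbb ⟨k + 1, by omega⟩]
      rw [pow_add, hgp, Algebra.smul_def]
      ring
    have h1 : wv V bb (a₁ • bb ⟨k, by omega⟩) = -1 - (k : ℚ) / p := by
      rw [wv_smul_basis V bb ha₁0, ha₁]
    have h2 : wv V bb (bb ⟨k + 1, by omega⟩ : L) = -(((k + 1 : ℕ) : ℚ) / p) := by
      exact wv_basis V bb _
    have hne : (a₁ • bb ⟨k, by omega⟩ : L) ≠ 0 :=
      smul_ne_zero ha₁0 (bb.ne_zero _)
    have hp0' : (0 : ℚ) < (p : ℚ) := by exact_mod_cast (by omega : 0 < p)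
    have hcomp : wv V bb (a₁ • bb ⟨k, by omega⟩ : L) < wv V bb (bb ⟨k + 1, by omega⟩ : L) := by
      rw [h1, h2]
      push_cast
      have hfrac : ((k : ℚ) + 1) / p - (k : ℚ) / p = 1 / p := by
        rw [div_sub_div_same]; norm_num
      have hlt1 : (1 : ℚ) / p < 1 := by
        rw [div_lt_one hp0']; exact_mod_cast (by omega : 1 < p)
      linarith
    obtain ⟨hne2, heq2⟩ := wv_add_left V bb hne (Or.inr hcomp)
    rw [hsplit]
    refine ⟨hne2, ?_⟩
    rw [heq2, h1]
    push_cast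
    field_simp
    ring

theorem wv_mul_ge (hp2 : 2 ≤ p) (hbb : ∀ i : Fin p, bb i = g ^ (i : ℕ))
    (hg : g ^ p - g = algebraMap K L a₁) (ha₁ : V.v a₁ = -1) (ha₁0 : a₁ ≠ 0)
    {x y : L} (hx : x ≠ 0) (hy : y ≠ 0) :
    wv V bb x + wv V bb y ≤ wv V bb (x * y) := by
  have hxy : x * y ≠ 0 := mul_ne_zero hx hy
  have hxs : x = ∑ i, bb.repr x i • bb i := (bb.sum_repr x).symm
  have hys : y = ∑ j, bb.repr y j • bb j := (bb.sum_repr y).symm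
  have hprod : x * y = ∑ i : Fin p, ∑ j : Fin p,
      (bb.repr x i * bb.repr y j) • g ^ ((i : ℕ) + (j : ℕ)) := by
    conv_lhs => rw [hxs, hys]
    rw [Finset.sum_mul_sum]
    refine Finset.sum_congr rfl fun i _ => Finset.sum_congr rfl fun j _ => ?_
    rw [hbb i, hbb j, smul_mul_smul_comm, pow_add]
  have hterm : ∀ i j : Fin p,
      (bb.repr x i * bb.repr y j) • g ^ ((i : ℕ) + (j : ℕ)) = 0 ∨
      wv V bb x + wv V bb y ≤
        wv V bb ((bb.repr x i * bb.repr y j) • g ^ ((i : ℕ) + (j : ℕ))) := by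
    intro i j
    by_cases hxi : bb.repr x i = 0
    · left; rw [hxi, zero_mul, zero_smul]
    by_cases hyj : bb.repr y j = 0
    · left; rw [hyj, mul_zero, zero_smul]
    right
    have hij : (i : ℕ) + (j : ℕ) ≤ 2 * p - 2 := by
      have := i.isLt; have := j.isLt; omega
    obtain ⟨hgne, hgval⟩ := wv_gpow V bb hp2 hbb hg ha₁ ha₁0 hij
    rw [wv_smul V bb (mul_ne_zero hxi hyj) hgne, hgval,
      V.v_mul _ _ hxi hyj]
    have h1 := wv_le V bb hxi
    have h2 := wv_le V bb hyj
    push_cast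
    have hsp : (((i : ℕ) : ℚ) + ((j : ℕ) : ℚ)) / p = ((i : ℕ) : ℚ) / p + ((j : ℕ) : ℚ) / p :=
      add_div _ _ _
    linarith [h1, h2]
  rcases v_sum (wv V bb) (fun a b ha hb hab => wv_add V bb ha hb hab) Finset.univ
      (fun i => ∑ j : Fin p, (bb.repr x i * bb.repr y j) • g ^ ((i : ℕ) + (j : ℕ)))
      (wv V bb x + wv V bb y)
      (fun i _ => v_sum (wv V bb) (fun a b ha hb hab => wv_add V bb ha hb hab) Finset.univ _ _
        (fun j _ => hterm i j)) with h | h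
  · rw [hprod] at hxy; exact absurd h hxy
  · rw [hprod]; exact h

theorem wv_mul (hdisc : V.HasIndex 1) (hp2 : 2 ≤ p)
    (hbb : ∀ i : Fin p, bb i = g ^ (i : ℕ))
    (hg : g ^ p - g = algebraMap K L a₁) (ha₁ : V.v a₁ = -1) (ha₁0 : a₁ ≠ 0)
    {x y : L} (hx : x ≠ 0) (hy : y ≠ 0) :
    wv V bb (x * y) = wv V bb x + wv V bb y := by
  obtain ⟨i, c, hc, hxval, hx'⟩ := wv_decomp V bb hdisc hx
  obtain ⟨j, d, hd, hyval, hy'⟩ := wv_decomp V bb hdisc hy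
  set x' := x - c • bb i with hx'def
  set y' := y - d • bb j with hy'def
  have hxeq : x = c • bb i + x' := by rw [hx'def]; ring
  have hyeq : y = d • bb j + y' := by rw [hy'def]; ring
  have hij : (i : ℕ) + (j : ℕ) ≤ 2 * p - 2 := by
    have := i.isLt; have := j.isLt; omega
  obtain ⟨hgne, hgval⟩ := wv_gpow V bb hp2 hbb hg ha₁ ha₁0 hij
  have hmainne : (c * d) • g ^ ((i : ℕ) + (j : ℕ)) ≠ 0 :=
    smul_ne_zero (mul_ne_zero hc hd) hgne
  have hmainval : wv V bb ((c * d) • g ^ ((i : ℕ) + (j : ℕ))) = wv V bb x + wv V bb y := by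
    rw [wv_smul V bb (mul_ne_zero hc hd) hgne, hgval, V.v_mul _ _ hc hd, hxval, hyval]
    push_cast
    have hsp : (((i : ℕ) : ℚ) + ((j : ℕ) : ℚ)) / p = ((i : ℕ) : ℚ) / p + ((j : ℕ) : ℚ) / p :=
      add_div _ _ _
    linarith
  have hmain : x * y = (c * d) • g ^ ((i : ℕ) + (j : ℕ)) + ((c • bb i) * y' + x' * y) := by
    conv_lhs => rw [hxeq, hyeq]
    rw [hxeq, hyeq] at *
    have hbbij : (bb i : L) * bb j = g ^ ((i : ℕ) + (j : ℕ)) := by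
      rw [hbb i, hbb j, pow_add]
    rw [← hbbij, ← smul_mul_smul_comm]
    ring
  -- bound the remainder
  have hsmall : ((c • bb i) * y' + x' * y) = 0 ∨
      wv V bb x + wv V bb y < wv V bb ((c • bb i) * y' + x' * y) := by
    have hcbbne : (c • bb i : L) ≠ 0 := smul_ne_zero hc (bb.ne_zero i)
    have hcbbval : wv V bb (c • bb i) = wv V bb x := by
      rw [wv_smul_basis V bb hc, hxval]
    have hterm1 : (c • bb i) * y' = 0 ∨ ((c • bb i) * y' ≠ 0 ∧
        wv V bb x + wv V bb y < wv V bb ((c • bb i) * y')) := by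
      rcases hy' with h0 | ⟨hy'ne, hy'lt⟩
      · left; rw [h0, mul_zero]
      · refine Or.inr ⟨mul_ne_zero hcbbne hy'ne, ?_⟩
        have hge := wv_mul_ge V bb hp2 hbb hg ha₁ ha₁0 hcbbne hy'ne
        rw [hcbbval] at hge
        linarith
    have hterm2 : x' * y = 0 ∨ (x' * y ≠ 0 ∧
        wv V bb x + wv V bb y < wv V bb (x' * y)) := by
      rcases hx' with h0 | ⟨hx'ne, hx'lt⟩
      · left; rw [h0, zero_mul]
      · refine Or.inr ⟨mul_ne_zero hx'ne hy, ?_⟩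
        have hge := wv_mul_ge V bb hp2 hbb hg ha₁ ha₁0 hx'ne hy
        linarith
    rcases hterm1 with h1 | ⟨h1ne, h1⟩
    · rw [h1, zero_add]
      rcases hterm2 with h2 | ⟨h2ne, h2⟩
      · exact Or.inl h2
      · exact Or.inr h2
    rcases hterm2 with h2 | ⟨h2ne, h2⟩
    · rw [h2, add_zero]; exact Or.inr h1
    by_cases hsum : (c • bb i) * y' + x' * y = 0
    · exact Or.inl hsum
    right
    have := wv_add V bb h1ne h2ne hsum
    rcases min_le_iff.1 (le_refl (min (wv V bb ((c • bb i) * y')) (wv V bb (x' * y)))) with _ | _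
    exact lt_of_lt_of_le (lt_min h1 h2) this
    exact lt_of_lt_of_le (lt_min h1 h2) this
  obtain ⟨hne2, heq2⟩ := wv_add_left V bb hmainne (by
    rcases hsmall with h | h
    · exact Or.inl h
    · exact Or.inr (by rw [hmainval]; exact h))
  rw [hmain, heq2, hmainval]

theorem wv_algebraMap (hp2 : 2 ≤ p) (hbb : ∀ i : Fin p, bb i = g ^ (i : ℕ))
    {c : K} (hc : c ≠ 0) :
    algebraMap K L c ≠ 0 ∧ wv V bb (algebraMap K L c) = V.v c := by
  have h0 : (⟨0, by omega⟩ : Fin p) = ⟨0, by omega⟩ := rfl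
  have hb0 : (bb ⟨0, by omega⟩ : L) = 1 := by rw [hbb ⟨0, by omega⟩]; simp
  have halg : algebraMap K L c = c • bb ⟨0, by omega⟩ := by
    rw [hb0, Algebra.algebraMap_eq_smul_one]
  constructor
  · rw [halg]; exact smul_ne_zero hc (bb.ne_zero _)
  · rw [halg, wv_smul_basis V bb hc]
    simp

theorem wv_complete (hcomp : V.IsComplete) (hp0 : 0 < p) (f : ℕ → L)
    (hf : ∀ C : ℚ, ∃ N : ℕ, ∀ m n : ℕ, N ≤ m → N ≤ n →
      f m = f n ∨ C ≤ wv V bb (f m - f n)) :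
    ∃ a : L, ∀ C : ℚ, ∃ N : ℕ, ∀ n : ℕ, N ≤ n → f n = a ∨ C ≤ wv V bb (f n - a) := by
  have hcoord : ∀ i : Fin p, ∃ b : K, ∀ C : ℚ, ∃ N : ℕ, ∀ n : ℕ, N ≤ n →
      bb.repr (f n) i = b ∨ C ≤ V.v (bb.repr (f n) i - b) := by
    intro i
    apply hcomp
    intro C
    obtain ⟨N, hN⟩ := hf C
    refine ⟨N, fun m n hm hn => ?_⟩
    rcases hN m n hm hn with heq | hC
    · left; rw [heq]
    by_cases hz : bb.repr (f m) i - bb.repr (f n) i = 0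
    · left; exact sub_eq_zero.1 hz
    right
    have hz' : bb.repr (f m - f n) i ≠ 0 := by
      rw [map_sub]; exact hz
    have hle := wv_le V bb hz'
    have hip : (0 : ℚ) ≤ ((i : ℕ) : ℚ) / p := by positivity
    have : bb.repr (f m - f n) i = bb.repr (f m) i - bb.repr (f n) i := by rw [map_sub]; rfl
    rw [this] at hle
    linarith
  choose b hb using hcoord
  refine ⟨∑ i, b i • bb i, fun C => ?_⟩
  choose N hN using fun i => hb i (C + 1)
  refine ⟨Finset.univ.sup N, fun n hn => ?_⟩
  by_cases hfa : f n = ∑ i, b i • bb i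
  · exact Or.inl hfa
  right
  have hz : f n - ∑ i, b i • bb i ≠ 0 := sub_ne_zero.2 hfa
  obtain ⟨j, hj, heq⟩ := wv_exists V bb hz
  have hreprj : bb.repr (f n - ∑ i, b i • bb i) j = bb.repr (f n) j - b j := by
    have h1 : bb.repr (∑ i, b i • bb i) j = b j := by
      have := bb.repr_sum_self b
      calc bb.repr (∑ i, b i • bb i) j = (⇑(bb.repr (∑ i, b i • bb i))) j := rfl
        _ = b j := by rw [this]
    rw [map_sub, Finsupp.sub_apply, h1]
  have hjn : bb.repr (f n) j ≠ b j := by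
    intro h; rw [hreprj, h, sub_self] at hj; exact hj rfl
  have hbound := (hN j n (le_trans (Finset.le_sup (Finset.mem_univ j)) hn)).resolve_left hjn
  have hjp : ((j : ℕ) : ℚ) / p ≤ 1 := by
    rw [div_le_one (by exact_mod_cast hp0 : (0:ℚ) < (p:ℚ))]
    exact_mod_cast le_of_lt j.isLt
  rw [heq, hreprj]
  linarith

end W

section Newton

variable {K : Type u} {L : Type w} [Field K] [Field L] [Algebra K L] [CharZero K]

set_option maxHeartbeats 2000000 in
theorem newton_root {p : ℕ} (hp : p.Prime) (V : AddVal K) (hdisc : V.HasIndex 1)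
    (habs : V.v (p : K) = 1) (hcomp : V.IsComplete) {a₁ a₂ : K} (ha₁ : V.v a₁ = -1)
    (ha₁0 : a₁ ≠ 0) (hb : 1 ≤ V.v (a₁ - a₂)) (hbne : a₁ - a₂ ≠ 0)
    {g : L} (hg : g ^ p - g = algebraMap K L a₁)
    (bb : Module.Basis (Fin p) K L) (hbb : ∀ i : Fin p, bb i = g ^ (i : ℕ)) :
    ∃ y : L, y ^ p - y = algebraMap K L a₂ := by
  have hp2 : 2 ≤ p := hp.two_le
  have hp0' : (0 : ℚ) < (p : ℚ) := by exact_mod_cast hp.pos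
  -- basic multiplicative facts
  have hWmul : ∀ x y : L, x ≠ 0 → y ≠ 0 → wv V bb (x * y) = wv V bb x + wv V bb y :=
    fun x y hx hy => wv_mul V bb hdisc hp2 hbb hg ha₁ ha₁0 hx hy
  have hW1 : wv V bb (1 : L) = 0 := by
    have h := (wv_algebraMap V bb hp2 hbb (one_ne_zero : (1 : K) ≠ 0)).2
    rw [map_one] at h
    rw [h, v_one V]
  have hWpow : ∀ z : L, z ≠ 0 → ∀ n : ℕ, wv V bb (z ^ n) = n * wv V bb z := by
    intro z hz n
    induction n with
    | zero => rw [pow_zero, hW1]; simp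
    | succ n ih =>
        rw [pow_succ, hWmul _ _ (pow_ne_zero n hz) hz, ih]
        push_cast; ring
  have hWinv : ∀ z : L, z ≠ 0 → wv V bb z⁻¹ = -wv V bb z := by
    intro z hz
    have := hWmul z z⁻¹ hz (inv_ne_zero hz)
    rw [mul_inv_cancel₀ hz, hW1] at this
    linarith
  have hWdiv : ∀ x y : L, x ≠ 0 → y ≠ 0 → wv V bb (x / y) = wv V bb x - wv V bb y := by
    intro x y hx hy
    rw [div_eq_mul_inv, hWmul x y⁻¹ hx (inv_ne_zero hy), hWinv y hy]; ring
  have hgne : g ≠ 0 ∧ wv V bb g = -(1 / (p : ℚ)) := by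
    have h := wv_gpow V bb hp2 hbb hg ha₁ ha₁0 (show (1 : ℕ) ≤ 2 * p - 2 by omega)
    rw [pow_one] at h
    refine ⟨h.1, ?_⟩
    rw [h.2]; norm_num
  have hnear : ∀ z : L, (z - g = 0 ∨ 1 ≤ wv V bb (z - g)) →
      z ≠ 0 ∧ wv V bb z = -(1 / (p : ℚ)) := by
    intro z hz
    have hcond : z - g = 0 ∨ wv V bb g < wv V bb (z - g) := by
      rcases hz with h | h
      · exact Or.inl h
      · right; rw [hgne.2]
        have h0 : (0 : ℚ) < 1 / (p : ℚ) := by positivity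
        linarith
    obtain ⟨hne, heq⟩ := wv_add_left V bb hgne.1 hcond
    have hzz : g + (z - g) = z := by ring
    rw [hzz] at hne heq
    rw [heq]
    exact ⟨hne, hgne.2⟩
  have hpKne : (p : K) ≠ 0 := Nat.cast_ne_zero.2 hp.pos.ne'
  have hpLval : (p : L) ≠ 0 ∧ wv V bb (p : L) = 1 := by
    have h := wv_algebraMap V bb hp2 hbb hpKne
    rw [map_natCast] at h
    exact ⟨h.1, by rw [h.2, habs]⟩
  have hunit : ∀ z : L, (z - g = 0 ∨ 1 ≤ wv V bb (z - g)) →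
      ((p : L) * z ^ (p - 1) - 1 ≠ 0 ∧ wv V bb ((p : L) * z ^ (p - 1) - 1) = 0) := by
    intro z hz
    obtain ⟨hz0, hzval⟩ := hnear z hz
    have hzpne : z ^ (p - 1) ≠ 0 := pow_ne_zero _ hz0
    have hprod : wv V bb ((p : L) * z ^ (p - 1)) = 1 / (p : ℚ) := by
      rw [hWmul _ _ hpLval.1 hzpne, hpLval.2, hWpow z hz0, hzval]
      have hcast : ((p - 1 : ℕ) : ℚ) = (p : ℚ) - 1 := by
        have h' : p - 1 + 1 = p := by omega
        have := congrArg (fun t : ℕ => (t : ℚ)) h'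
        push_cast at this
        linarith
      rw [hcast]
      field_simp
      ring
    have hneg1 : (-1 : L) ≠ 0 := by norm_num
    have hwneg1 : wv V bb (-1 : L) = 0 := by
      rw [wv_neg V bb one_ne_zero, hW1]
    obtain ⟨hne, heq⟩ := wv_add_left V bb (x := (-1 : L)) (y := (p : L) * z ^ (p - 1))
      hneg1 (Or.inr (by rw [hwneg1, hprod]; positivity))
    have hzz : (-1 : L) + (p : L) * z ^ (p - 1) = (p : L) * z ^ (p - 1) - 1 := by ring
    rw [hzz] at hne heq
    rw [heq, hwneg1]
    exact ⟨hne, rfl⟩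
  -- Taylor estimate
  have htaylor : ∀ u h : L, (u - g = 0 ∨ 1 ≤ wv V bb (u - g)) → h ≠ 0 →
      ∀ M : ℚ, 1 ≤ M → M ≤ wv V bb h →
      ((u + h) ^ p - u ^ p - (p : L) * u ^ (p - 1) * h = 0 ∨
        2 * M ≤ wv V bb ((u + h) ^ p - u ^ p - (p : L) * u ^ (p - 1) * h)) := by
    intro u h hu hh M hM1 hMh
    obtain ⟨hu0, huval⟩ := hnear u hu
    obtain ⟨q, hq⟩ : ∃ q, p = q + 2 := ⟨p - 2, by omega⟩
    have hbinom := add_pow u h p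
    have hEeq : (u + h) ^ p - u ^ p - (p : L) * u ^ (p - 1) * h =
        ∑ k ∈ Finset.range (q + 1), u ^ k * h ^ (p - k) * (p.choose k : L) := by
      subst hq
      rw [hbinom, Finset.sum_range_succ, Finset.sum_range_succ]
      have e1 : (q + 2).choose (q + 2) = 1 := Nat.choose_self _
      have e2 : (q + 2).choose (q + 1) = q + 2 := Nat.choose_succ_self_right _
      have e3 : q + 2 - (q + 2) = 0 := by omega
      have e4 : q + 2 - (q + 1) = 1 := by omega
      have e5 : q + 2 - 1 = q + 1 := by omega
      rw [e1, e2, e3, e4, e5, pow_zero, pow_one, Nat.cast_one, mul_one]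
      push_cast
      ring
    rw [hEeq]
    refine v_sum (wv V bb) (fun a b ha hbb' hab => wv_add V bb ha hbb' hab) _ _ _
      (fun k hk => ?_)
    right
    have hkq : k ≤ q := by have := Finset.mem_range.1 hk; omega
    have hkp : k < p := by omega
    have hchooseK : ((p.choose k : K)) ≠ 0 :=
      Nat.cast_ne_zero.2 (Nat.choose_pos (le_of_lt hkp)).ne'
    have hchooseL : ((p.choose k : L)) ≠ 0 ∧
        wv V bb ((p.choose k : L)) = V.v ((p.choose k : K)) := by
      have hcl := wv_algebraMap V bb hp2 hbb hchooseK
      rw [map_natCast] at hcl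
      exact hcl
    have hhne : h ^ (p - k) ≠ 0 := pow_ne_zero _ hh
    have hune : u ^ k ≠ 0 := pow_ne_zero _ hu0
    have hval : wv V bb (u ^ k * h ^ (p - k) * (p.choose k : L)) =
        (k : ℚ) * (-(1 / (p : ℚ))) + ((p - k : ℕ) : ℚ) * wv V bb h +
          V.v ((p.choose k : K)) := by
      rw [hWmul _ _ (mul_ne_zero hune hhne) hchooseL.1, hWmul _ _ hune hhne,
        hWpow u hu0, hWpow h hh, huval, hchooseL.2]
    rw [hval]
    have hcast1 : ((p - k : ℕ) : ℚ) = (p : ℚ) - k := by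
      have h' : p - k + k = p := by omega
      have := congrArg (fun t : ℕ => (t : ℚ)) h'
      push_cast at this
      linarith
    have hpk2 : (2 : ℚ) ≤ ((p - k : ℕ) : ℚ) := by exact_mod_cast (by omega : 2 ≤ p - k)
    have hwh0 : (0 : ℚ) < wv V bb h := lt_of_lt_of_le (by linarith) hMh
    by_cases hk0 : k = 0
    · subst hk0
      simp only [Nat.choose_zero_right, Nat.cast_one, Nat.cast_zero, zero_mul, zero_add]
      rw [v_one V]
      have : 2 * M ≤ ((p - 0 : ℕ) : ℚ) * M := by
        nlinarith
      calc 2 * M ≤ ((p - 0 : ℕ) : ℚ) * M := this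
        _ ≤ ((p - 0 : ℕ) : ℚ) * wv V bb h := by nlinarith
        _ = ((p - 0 : ℕ) : ℚ) * wv V bb h + 0 := by ring
    · have hdvd : p ∣ p.choose k := hp.dvd_choose_self hk0 hkp
      obtain ⟨r, hr⟩ := hdvd
      have hr0 : r ≠ 0 := by
        intro h0; rw [h0, mul_zero] at hr
        exact (Nat.choose_pos (le_of_lt hkp)).ne' hr
      have hvchoose : 1 ≤ V.v ((p.choose k : K)) := by
        have : ((p.choose k : K)) = (p : K) * (r : K) := by
          rw [hr]; push_cast; ring
        rw [this, V.v_mul _ _ hpKne (Nat.cast_ne_zero.2 hr0), habs]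
        have := v_natCast V r (Nat.cast_ne_zero.2 hr0)
        linarith
      have hkdiv : ((k : ℕ) : ℚ) / p ≤ 1 := by
        rw [div_le_one hp0']
        exact_mod_cast le_of_lt hkp
      have h1 : (k : ℚ) * (-(1 / (p : ℚ))) = -((k : ℚ) / p) := by ring
      have h2 : 2 * M ≤ ((p - k : ℕ) : ℚ) * wv V bb h := by nlinarith
      rw [h1]
      linarith
  -- the Newton iteration sequence
  set G : L → L := fun z => z ^ p - z - algebraMap K L a₂ with hGdef
  set G' : L → L := fun z => (p : L) * z ^ (p - 1) - 1 with hG'def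
  set zs : ℕ → L := fun n => Nat.rec g (fun _ u => u - G u / G' u) n with hzsdef
  have hzs0 : zs 0 = g := rfl
  have hzsS : ∀ n, zs (n + 1) = zs n - G (zs n) / G' (zs n) := fun n => rfl
  have hinv : ∀ n : ℕ, (zs n - g = 0 ∨ 1 ≤ wv V bb (zs n - g)) ∧
      (G (zs n) = 0 ∨ ((n : ℚ) + 1) ≤ wv V bb (G (zs n))) := by
    intro n
    induction n with
    | zero =>
        constructor
        · left; rw [hzs0, sub_self]
        · right
          have hGg : G g = algebraMap K L (a₁ - a₂) := by
            show g ^ p - g - algebraMap K L a₂ = _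
            rw [map_sub]
            linear_combination hg
          rw [hzs0, hGg, (wv_algebraMap V bb hp2 hbb hbne).2]
          simpa using hb
    | succ n ih =>
        obtain ⟨ih1, ih2⟩ := ih
        by_cases hGz : G (zs n) = 0
        · have hzz : zs (n + 1) = zs n := by rw [hzsS, hGz, zero_div, sub_zero]
          rw [hzz]; exact ⟨ih1, Or.inl hGz⟩
        · have hM := ih2.resolve_left hGz
          obtain ⟨hG'ne, hG'val⟩ := hunit (zs n) ih1
          have hdivne : G (zs n) / G' (zs n) ≠ 0 := div_ne_zero hGz hG'ne
          have hhne : -(G (zs n) / G' (zs n)) ≠ 0 := neg_ne_zero.2 hdivne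
          have hhval : wv V bb (-(G (zs n) / G' (zs n))) = wv V bb (G (zs n)) := by
            rw [wv_neg V bb hdivne, hWdiv _ _ hGz hG'ne]
            show wv V bb (G (zs n)) - wv V bb (G' (zs n)) = _
            rw [show wv V bb (G' (zs n)) = 0 from hG'val]
            ring
          have hznext : zs (n + 1) = zs n + -(G (zs n) / G' (zs n)) := by
            rw [hzsS]; ring
          have hMn : ((n : ℚ) + 1) ≤ wv V bb (-(G (zs n) / G' (zs n))) := by
            rw [hhval]; exact hM
          have hM1 : (1 : ℚ) ≤ wv V bb (-(G (zs n) / G' (zs n))) := by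
            have h0 : (0 : ℚ) ≤ (n : ℚ) := Nat.cast_nonneg n
            linarith
          constructor
          · have hsplit : zs (n + 1) - g = (zs n - g) + -(G (zs n) / G' (zs n)) := by
              rw [hznext]; ring
            rcases ih1 with h0 | h1
            · rw [hsplit, h0, zero_add]; exact Or.inr hM1
            by_cases hzero : zs (n + 1) - g = 0
            · exact Or.inl hzero
            right
            by_cases hzng : zs n - g = 0
            · rw [hsplit, hzng, zero_add]; exact hM1
            rw [hsplit]
            rw [hsplit] at hzero
            exact le_trans (le_min h1 hM1) (wv_add V bb hzng hhne hzero)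
          · have hE := htaylor (zs n) (-(G (zs n) / G' (zs n))) ih1 hhne
              (wv V bb (-(G (zs n) / G' (zs n)))) hM1 le_rfl
            have hcancel : G (zs n) + G' (zs n) * -(G (zs n) / G' (zs n)) = 0 := by
              field_simp
              rw [div_self (show G' (zs n) ≠ 0 from hG'ne)]; ring
            have hGnext : G (zs (n + 1)) =
                (zs n + -(G (zs n) / G' (zs n))) ^ p - zs n ^ p -
                  (p : L) * zs n ^ (p - 1) * -(G (zs n) / G' (zs n)) := by
              rw [hznext]
              show (zs n + -(G (zs n) / G' (zs n))) ^ p - (zs n + -(G (zs n) / G' (zs n))) -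
                algebraMap K L a₂ = _
              have hGzn : G (zs n) = zs n ^ p - zs n - algebraMap K L a₂ := rfl
              have hG'zn : G' (zs n) = (p : L) * zs n ^ (p - 1) - 1 := rfl
              rw [hG'zn] at hcancel
              rw [hGzn] at hcancel
              linear_combination hcancel
            rcases hE with h0 | h2
            · left; rw [hGnext]; exact h0
            · right
              rw [hGnext]
              refine le_trans ?_ h2
              push_cast
              linarith
  -- differences
  have hdiffs : ∀ n m : ℕ, n ≤ m →
      (zs m - zs n = 0 ∨ ((n : ℚ) + 1) ≤ wv V bb (zs m - zs n)) := by
    intro n m hnm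
    induction m, hnm using Nat.le_induction with
    | base => left; rw [sub_self]
    | succ m hnm ih =>
        by_cases hGz : G (zs m) = 0
        · have hzz : zs (m + 1) = zs m := by rw [hzsS, hGz, zero_div, sub_zero]
          rw [hzz]; exact ih
        · obtain ⟨im1, im2⟩ := hinv m
          have hM := im2.resolve_left hGz
          obtain ⟨hG'ne, hG'val⟩ := hunit (zs m) im1
          have hdivne : G (zs m) / G' (zs m) ≠ 0 := div_ne_zero hGz hG'ne
          have hdne : zs (m + 1) - zs m ≠ 0 := by
            rw [hzsS]
            intro hcon
            apply hdivne
            linear_combination -hcon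
          have hdval : ((n : ℚ) + 1) ≤ wv V bb (zs (m + 1) - zs m) := by
            have hstep : zs (m + 1) - zs m = -(G (zs m) / G' (zs m)) := by
              rw [hzsS]; ring
            rw [hstep, wv_neg V bb hdivne, hWdiv _ _ hGz hG'ne,
              show wv V bb (G' (zs m)) = 0 from hG'val, sub_zero]
            have : (n : ℚ) ≤ (m : ℚ) := by exact_mod_cast hnm
            linarith
          have hsplit : zs (m + 1) - zs n = (zs (m + 1) - zs m) + (zs m - zs n) := by ring
          rcases ih with h0 | h1
          · rw [hsplit, h0, add_zero]; exact Or.inr hdval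
          by_cases hzero : zs (m + 1) - zs n = 0
          · exact Or.inl hzero
          right
          by_cases hmn0 : zs m - zs n = 0
          · rw [hsplit, hmn0, add_zero]; exact hdval
          rw [hsplit]
          rw [hsplit] at hzero
          exact le_trans (le_min hdval h1) (wv_add V bb hdne hmn0 hzero)
  -- Cauchy and limit
  have hcauchy : ∀ C : ℚ, ∃ N : ℕ, ∀ m n : ℕ, N ≤ m → N ≤ n →
      zs m = zs n ∨ C ≤ wv V bb (zs m - zs n) := by
    intro C
    obtain ⟨N, hNC⟩ := exists_nat_ge C
    refine ⟨N, fun m n hm hn => ?_⟩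
    by_cases heq : zs m = zs n
    · exact Or.inl heq
    right
    rcases le_total n m with hnm | hmn
    · have := (hdiffs n m hnm).resolve_left (sub_ne_zero.2 heq)
      have hNn : (N : ℚ) ≤ (n : ℚ) := by exact_mod_cast hn
      linarith
    · have := (hdiffs m n hmn).resolve_left (sub_ne_zero.2 (fun hcon => heq hcon.symm))
      have hneg : zs m - zs n = -(zs n - zs m) := by ring
      rw [hneg, wv_neg V bb (sub_ne_zero.2 (fun hcon => heq hcon.symm))]
      have hNm : (N : ℚ) ≤ (m : ℚ) := by exact_mod_cast hm
      linarith
  obtain ⟨y, hy⟩ := wv_complete V bb hcomp hp.pos zs hcauchy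
  -- y is close to g
  have hyg : y - g = 0 ∨ 1 ≤ wv V bb (y - g) := by
    by_cases hyg0 : y - g = 0
    · exact Or.inl hyg0
    right
    obtain ⟨N₁, hN₁⟩ := hy 1
    rcases hN₁ N₁ le_rfl with heq | hfar
    · rw [← heq]
      rcases (hinv N₁).1 with h0 | h1
      · exact absurd (heq ▸ h0) hyg0
      · exact h1
    by_cases hzy : zs N₁ = y
    · rw [← hzy]
      rcases (hinv N₁).1 with h0 | h1
      · exact absurd (hzy ▸ h0) hyg0
      · exact h1
    have hzyne : y - zs N₁ ≠ 0 := sub_ne_zero.2 (fun h => hzy h.symm)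
    have h2 : 1 ≤ wv V bb (y - zs N₁) := by
      have hneg : y - zs N₁ = -(zs N₁ - y) := by ring
      rw [hneg, wv_neg V bb (sub_ne_zero.2 hzy)]
      exact hfar
    have hsplit : y - g = (zs N₁ - g) + (y - zs N₁) := by ring
    rcases (hinv N₁).1 with h0 | h1
    · rw [hsplit, h0, zero_add]; exact h2
    by_cases hng : zs N₁ - g = 0
    · rw [hsplit, hng, zero_add]; exact h2
    rw [hsplit]
    refine le_trans (le_min h1 h2) (wv_add V bb hng hzyne ?_)
    rw [← hsplit]; exact hyg0
  obtain ⟨hy0, hyval⟩ := hnear y hyg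
  -- G y = 0
  have hGy0 : G y = 0 := by
    by_contra hGy
    set Cy := wv V bb (G y) with hCydef
    obtain ⟨N₂, hN₂⟩ := hy (Cy + 2)
    obtain ⟨N₃, hN₃⟩ := exists_nat_ge (Cy + 1)
    set n := max N₂ N₃ with hndef
    obtain ⟨hin1, hin2⟩ := hinv n
    obtain ⟨hu0, huval⟩ := hnear (zs n) hin1
    have hnN₃ : Cy + 1 ≤ (n : ℚ) := le_trans hN₃ (by exact_mod_cast le_max_right N₂ N₃)
    have hcontra : G (zs n) = G y → False := by
      intro hcon
      rcases hin2 with h0 | h1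
      · exact hGy (hcon ▸ h0)
      · rw [hcon] at h1
        rw [← hCydef] at h1
        linarith
    rcases hN₂ n (le_max_left _ _) with heq | hfar
    · exact hcontra (by rw [heq])
    by_cases hzy : zs n = y
    · exact hcontra (by rw [hzy])
    have hzyne : zs n - y ≠ 0 := sub_ne_zero.2 hzy
    have hfac := geom_sum₂_mul (zs n) y p
    have hdiff : G (zs n) - G y =
        ((∑ i ∈ Finset.range p, zs n ^ i * y ^ (p - 1 - i)) - 1) * (zs n - y) := by
      show (zs n ^ p - zs n - algebraMap K L a₂) - (y ^ p - y - algebraMap K L a₂) = _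
      linear_combination -hfac
    have hS : (∑ i ∈ Finset.range p, zs n ^ i * y ^ (p - 1 - i)) = 0 ∨
        (-1 : ℚ) ≤ wv V bb (∑ i ∈ Finset.range p, zs n ^ i * y ^ (p - 1 - i)) := by
      refine v_sum (wv V bb) (fun a b ha hbb' hab => wv_add V bb ha hbb' hab) _ _ _
        (fun i hi => ?_)
      right
      have hi' : i < p := Finset.mem_range.1 hi
      have hterm : wv V bb (zs n ^ i * y ^ (p - 1 - i)) =
          (i : ℚ) * (-(1 / (p : ℚ))) + ((p - 1 - i : ℕ) : ℚ) * (-(1 / (p : ℚ))) := by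
        rw [hWmul _ _ (pow_ne_zero _ hu0) (pow_ne_zero _ hy0), hWpow _ hu0, hWpow _ hy0,
          huval, hyval]
      rw [hterm]
      have hcast : ((p - 1 - i : ℕ) : ℚ) = (p : ℚ) - 1 - i := by
        have h' : p - 1 - i + (i + 1) = p := by omega
        have := congrArg (fun t : ℕ => (t : ℚ)) h'
        push_cast at this
        linarith
      rw [hcast]
      have hsum : (i : ℚ) * (-(1 / (p : ℚ))) + ((p : ℚ) - 1 - i) * (-(1 / (p : ℚ))) =
          -(((p : ℚ) - 1) / p) := by field_simp; ring
      rw [hsum]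
      have hle1 : ((p : ℚ) - 1) / p ≤ 1 := by
        rw [div_le_one hp0']; linarith
      linarith
    have hS1 : ((∑ i ∈ Finset.range p, zs n ^ i * y ^ (p - 1 - i)) - 1 = 0) ∨
        ((∑ i ∈ Finset.range p, zs n ^ i * y ^ (p - 1 - i)) - 1 ≠ 0 ∧
          (-1 : ℚ) ≤ wv V bb ((∑ i ∈ Finset.range p, zs n ^ i * y ^ (p - 1 - i)) - 1)) := by
      set S := ∑ i ∈ Finset.range p, zs n ^ i * y ^ (p - 1 - i) with hSdef
      by_cases hz0 : S - 1 = 0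
      · exact Or.inl hz0
      refine Or.inr ⟨hz0, ?_⟩
      by_cases hSz : S = 0
      · rw [hSz, zero_sub, wv_neg V bb one_ne_zero, hW1]; norm_num
      have hSv := hS.resolve_left hSz
      have hstep : S - 1 = S + (-1 : L) := by ring
      rw [hstep]
      rw [hstep] at hz0
      refine le_trans (le_min hSv ?_) (wv_add V bb hSz (by norm_num) hz0)
      rw [wv_neg V bb one_ne_zero, hW1]
      norm_num
    by_cases hGz0 : G (zs n) = 0
    · rcases hS1 with h0 | ⟨hS1ne, hS1v⟩
      · exact hcontra (sub_eq_zero.1 (by rw [hdiff, h0, zero_mul]))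
      · have hDne : G (zs n) - G y ≠ 0 := by rw [hdiff]; exact mul_ne_zero hS1ne hzyne
        have hDval : Cy + 1 ≤ wv V bb (G (zs n) - G y) := by
          rw [hdiff, hWmul _ _ hS1ne hzyne]
          linarith
        have hDeq : wv V bb (G (zs n) - G y) = Cy := by
          have hh : G (zs n) - G y = -(G y) := by rw [hGz0]; ring
          rw [hh, wv_neg V bb hGy, ← hCydef]
        linarith
    · have hGv := hin2.resolve_left hGz0
      rcases hS1 with h0 | ⟨hS1ne, hS1v⟩
      · exact hcontra (sub_eq_zero.1 (by rw [hdiff, h0, zero_mul]))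
      have hDne : G (zs n) - G y ≠ 0 := by rw [hdiff]; exact mul_ne_zero hS1ne hzyne
      have hDval : Cy + 1 ≤ wv V bb (G (zs n) - G y) := by
        rw [hdiff, hWmul _ _ hS1ne hzyne]
        linarith
      have hGyeq : G (zs n) + -(G (zs n) - G y) = G y := by ring
      have hne2 : G (zs n) + -(G (zs n) - G y) ≠ 0 := by rw [hGyeq]; exact hGy
      have hmin := wv_add V bb hGz0 (neg_ne_zero.2 hDne) hne2
      rw [hGyeq, wv_neg V bb hDne, ← hCydef] at hmin
      have h1 : Cy + 1 ≤ wv V bb (G (zs n)) := by linarith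
      rcases min_le_iff.1 hmin with hA | hA <;> linarith
  refine ⟨y, ?_⟩
  have h := hGy0
  rw [show G y = y ^ p - y - algebraMap K L a₂ from rfl] at h
  linear_combination h

end Newton

section FT

open IntermediateField

variable {K : Type u} [Field K]

theorem AS_monic (p : ℕ) (hp2 : 2 ≤ p) (a : K) : (X ^ p - X - C a : K[X]).Monic := by
  have h : (X ^ p - X - C a : K[X]) = X ^ p - (X + C a) := by ring
  rw [h]
  apply monic_X_pow_sub
  refine lt_of_le_of_lt (degree_add_le _ _) ?_
  refine max_lt ?_ ?_
  · rw [degree_X]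
    exact_mod_cast (by omega : 1 < p)
  · exact lt_of_le_of_lt degree_C_le (by exact_mod_cast (by omega : 0 < p))

theorem AS_natDegree (p : ℕ) (hp2 : 2 ≤ p) (a : K) :
    (X ^ p - X - C a : K[X]).natDegree = p := by
  have h : (X ^ p - X - C a : K[X]) = X ^ p - (X + C a) := by ring
  rw [h, natDegree_sub_eq_left_of_natDegree_lt, natDegree_X_pow]
  rw [natDegree_X_pow]
  refine lt_of_le_of_lt (natDegree_add_le _ _) ?_
  rw [natDegree_X, natDegree_C]
  omega

theorem monic_dvd_eq {f h : K[X]} (hf : f.Monic) (hh : h.Monic) (hdvd : h ∣ f)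
    (hdeg : f.natDegree ≤ h.natDegree) : h = f := by
  obtain ⟨c, hc⟩ := hdvd
  have hc0 : c ≠ 0 := by
    intro h0; rw [h0, mul_zero] at hc; exact hf.ne_zero hc
  have hdeg' : f.natDegree = h.natDegree + c.natDegree := by
    rw [hc, natDegree_mul hh.ne_zero hc0]
  have hcd : c.natDegree = 0 := by omega
  obtain ⟨u, hu⟩ := natDegree_eq_zero.1 hcd
  have hl : (h * c).leadingCoeff = 1 := hc ▸ hf
  rw [leadingCoeff_mul, hh.leadingCoeff, one_mul, ← hu, leadingCoeff_C] at hl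
  rw [hc, ← hu, hl, map_one, mul_one]

theorem monic_dvd_irred {f h : K[X]} (hf : f.Monic) (hh : h.Monic) (hirr : Irreducible f)
    (hdvd : h ∣ f) (hdeg : 0 < h.natDegree) : h = f := by
  obtain ⟨c, hc⟩ := hdvd
  rcases hirr.isUnit_or_isUnit hc with hu | hu
  · exfalso
    have := natDegree_eq_zero_of_isUnit hu
    omega
  · obtain ⟨u, hu0, huc⟩ := Polynomial.isUnit_iff.1 hu
    have hl : (h * c).leadingCoeff = 1 := hc ▸ hf
    rw [leadingCoeff_mul, hh.leadingCoeff, one_mul, ← huc, leadingCoeff_C] at hl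
    rw [hc, ← huc, hl, map_one, mul_one]

theorem root_mem {x yy : AlgebraicClosure K} (hint : IsIntegral K x)
    (hnorm : Normal K K⟮x⟯) (hroot : Polynomial.aeval yy (minpoly K x) = 0) :
    yy ∈ K⟮x⟯ := by
  have hFne : minpoly K x ≠ 0 := minpoly.ne_zero hint
  have hgen : minpoly K (IntermediateField.AdjoinSimple.gen K x) = minpoly K x := by
    rw [← minpoly.algebraMap_eq
      (algebraMap (↥K⟮x⟯) (AlgebraicClosure K)).injective
      (IntermediateField.AdjoinSimple.gen K x),
      IntermediateField.AdjoinSimple.algebraMap_gen]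
  have hsplits : Splits ((minpoly K x).map (algebraMap K (↥K⟮x⟯))) := by
    rw [← hgen]; exact hnorm.splits _
  have hq : Splits ((minpoly K x).map (algebraMap K (↥K⟮x⟯))) :=
    hsplits
  have hroots := hq.roots_map (algebraMap (↥K⟮x⟯) (AlgebraicClosure K))
  have hmm : ((minpoly K x).map (algebraMap K (↥K⟮x⟯))).map
      (algebraMap (↥K⟮x⟯) (AlgebraicClosure K)) =
      (minpoly K x).map (algebraMap K (AlgebraicClosure K)) := by
    rw [Polynomial.map_map, ← IsScalarTower.algebraMap_eq]
  have hyroot : yy ∈ ((minpoly K x).map (algebraMap K (AlgebraicClosure K))).roots := by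
    refine (mem_roots ((Polynomial.map_ne_zero_iff
      (algebraMap K (AlgebraicClosure K)).injective).2 hFne)).2 ?_
    rw [IsRoot, eval_map, ← aeval_def]; exact hroot
  rw [← hmm, hroots] at hyroot
  obtain ⟨r, hr, hry⟩ := Multiset.mem_map.1 hyroot
  rw [← hry]
  exact r.2

end FT

end S1Aux
open IntermediateField in
set_option maxHeartbeats 1000000 in
theorem statement1' (p : ℕ) (hp : p.Prime) (hodd : Odd p)
    (K : Type u) [Field K] [CharZero K]
    (V : AddVal K) (hdisc : V.HasIndex 1) (habs : V.v (p : K) = 1) (hcomp : V.IsComplete)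
    (a₁ a₂ : K) (ha₁ : V.v a₁ = -1) (ha₂ : V.v a₂ = -1)
    (x₁ x₂ : AlgebraicClosure K)
    (hx₁ : x₁ ^ p - x₁ = algebraMap K (AlgebraicClosure K) a₁)
    (hx₂ : x₂ ^ p - x₂ = algebraMap K (AlgebraicClosure K) a₂)
    (hgal₂ : IsGalois K ↥(IntermediateField.adjoin K {x₂}))
    (hdeg₁ : Module.finrank K ↥(IntermediateField.adjoin K {x₁}) = p)
    (hdeg₂ : Module.finrank K ↥(IntermediateField.adjoin K {x₂}) = p)
    (hclose : a₁ = a₂ ∨ 1 ≤ V.v (a₁ - a₂)) :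
    IntermediateField.adjoin K {x₁} = IntermediateField.adjoin K {x₂} ∧
    ∃ y ∈ IntermediateField.adjoin K {x₁},
      y ^ p - y = algebraMap K (AlgebraicClosure K) a₂ := by
  classical
  have hp2 : 2 ≤ p := hp.two_le
  have hsing : ∀ z : AlgebraicClosure K,
      ({z} : Set (AlgebraicClosure K)) = insert z ∅ := by
    intro z; simp
  rw [hsing x₁, hsing x₂]
  have hdeg₁' : Module.finrank K (↥K⟮x₁⟯) = p := by convert hdeg₁ using 2
  have hdeg₂' : Module.finrank K (↥K⟮x₂⟯) = p := by convert hdeg₂ using 2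
  have hint₁ : IsIntegral K x₁ := ⟨X ^ p - X - C a₁, S1Aux.AS_monic p hp2 a₁, by
    rw [← aeval_def]
    simp only [map_sub, aeval_X_pow, aeval_X, aeval_C]
    linear_combination hx₁⟩
  have hint₂ : IsIntegral K x₂ := ⟨X ^ p - X - C a₂, S1Aux.AS_monic p hp2 a₂, by
    rw [← aeval_def]
    simp only [map_sub, aeval_X_pow, aeval_X, aeval_C]
    linear_combination hx₂⟩
  have hmin₁ : minpoly K x₁ = X ^ p - X - C a₁ := by
    refine S1Aux.monic_dvd_eq (S1Aux.AS_monic p hp2 a₁) (minpoly.monic hint₁) ?_ ?_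
    · exact minpoly.dvd K x₁ (by
        simp only [map_sub, aeval_X_pow, aeval_X, aeval_C]
        linear_combination hx₁)
    · rw [S1Aux.AS_natDegree p hp2 a₁, ← IntermediateField.adjoin.finrank hint₁]
      exact ge_of_eq (by convert hdeg₁ using 2)
  have hmin₂ : minpoly K x₂ = X ^ p - X - C a₂ := by
    refine S1Aux.monic_dvd_eq (S1Aux.AS_monic p hp2 a₂) (minpoly.monic hint₂) ?_ ?_
    · exact minpoly.dvd K x₂ (by
        simp only [map_sub, aeval_X_pow, aeval_X, aeval_C]
        linear_combination hx₂)
    · rw [S1Aux.AS_natDegree p hp2 a₂, ← IntermediateField.adjoin.finrank hint₂]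
      exact ge_of_eq (by convert hdeg₂ using 2)
  haveI hfd₁ : FiniteDimensional K (↥K⟮x₁⟯) := IntermediateField.adjoin.finiteDimensional hint₁
  haveI hfd₂ : FiniteDimensional K (↥K⟮x₂⟯) := IntermediateField.adjoin.finiteDimensional hint₂
  have ha₁0 : a₁ ≠ 0 := by
    intro h0
    have hirr := minpoly.irreducible hint₁
    rw [hmin₁] at hirr
    rw [h0, map_zero, sub_zero] at hirr
    have hfact : (X ^ p - X : K[X]) = X * (X ^ (p - 1) - 1) := by
      have hpp : p - 1 + 1 = p := by omega
      calc (X ^ p - X : K[X]) = X ^ (p - 1 + 1) - X := by rw [hpp]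
        _ = X * (X ^ (p - 1) - 1) := by ring
    rcases hirr.isUnit_or_isUnit hfact with hu | hu
    · exact Polynomial.not_isUnit_X hu
    · have hnd : (X ^ (p - 1) - 1 : K[X]).natDegree = p - 1 := by
        rw [show (1 : K[X]) = C 1 by rw [map_one], natDegree_X_pow_sub_C]
      have := natDegree_eq_zero_of_isUnit hu
      omega
  -- construct a root of X^p - X - a₂ inside K⟮x₁⟯
  have hexist : ∃ yy : AlgebraicClosure K, yy ∈ K⟮x₁⟯ ∧
      yy ^ p - yy = algebraMap K (AlgebraicClosure K) a₂ := by
    by_cases hcase : a₁ = a₂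
    · exact ⟨x₁, IntermediateField.mem_adjoin_simple_self K x₁, by rw [← hcase]; exact hx₁⟩
    have hb : 1 ≤ V.v (a₁ - a₂) := hclose.resolve_left hcase
    have hdim : (IntermediateField.adjoin.powerBasis hint₁).dim = p := by
      have hfr := PowerBasis.finrank (IntermediateField.adjoin.powerBasis hint₁)
      rw [← hfr]
      convert hdeg₁ using 2
    set bb : Module.Basis (Fin p) K (↥K⟮x₁⟯) :=
      (IntermediateField.adjoin.powerBasis hint₁).basis.reindex (finCongr hdim) with hbbdef
    have hbb : ∀ i : Fin p, bb i = IntermediateField.AdjoinSimple.gen K x₁ ^ (i : ℕ) := by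
      intro i
      rw [hbbdef, Module.Basis.reindex_apply, PowerBasis.basis_eq_pow]
      congr 1
    have hgen : (IntermediateField.AdjoinSimple.gen K x₁) ^ p -
        IntermediateField.AdjoinSimple.gen K x₁ = algebraMap K (↥K⟮x₁⟯) a₁ := by
      have hinj : Function.Injective (algebraMap (↥K⟮x₁⟯) (AlgebraicClosure K)) :=
        (algebraMap (↥K⟮x₁⟯) (AlgebraicClosure K)).injective
      apply hinj
      rw [map_sub, map_pow, IntermediateField.AdjoinSimple.algebraMap_gen,
        ← IsScalarTower.algebraMap_apply]
      exact hx₁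
    obtain ⟨y, hy⟩ := S1Aux.newton_root hp V hdisc habs hcomp ha₁ ha₁0 hb
      (sub_ne_zero.2 hcase) hgen bb hbb
    refine ⟨algebraMap (↥K⟮x₁⟯) (AlgebraicClosure K) y, y.2, ?_⟩
    rw [← map_pow, ← map_sub, hy, ← IsScalarTower.algebraMap_apply]
  obtain ⟨yy, hymem, hyeq⟩ := hexist
  have hyroot : Polynomial.aeval yy (minpoly K x₂) = 0 := by
    rw [hmin₂]
    simp only [map_sub, aeval_X_pow, aeval_X, aeval_C]
    linear_combination hyeq
  have hyint : IsIntegral K yy := ⟨X ^ p - X - C a₂, S1Aux.AS_monic p hp2 a₂, by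
    rw [← aeval_def]
    simp only [map_sub, aeval_X_pow, aeval_X, aeval_C]
    linear_combination hyeq⟩
  have hminy : minpoly K yy = minpoly K x₂ :=
    S1Aux.monic_dvd_irred (minpoly.monic hint₂) (minpoly.monic hyint)
      (minpoly.irreducible hint₂) (minpoly.dvd K yy hyroot) (minpoly.natDegree_pos hyint)
  have hfinry : Module.finrank K (↥K⟮yy⟯) = p := by
    rw [IntermediateField.adjoin.finrank hyint, hminy,
      ← IntermediateField.adjoin.finrank hint₂]
    convert hdeg₂ using 2
  haveI : FiniteDimensional K (↥K⟮yy⟯) := IntermediateField.adjoin.finiteDimensional hyint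
  have h1 : K⟮yy⟯ = K⟮x₁⟯ := IntermediateField.eq_of_le_of_finrank_eq
    (IntermediateField.adjoin_simple_le_iff.2 hymem) (by rw [hfinry, hdeg₁'])
  haveI hn₂ : Normal K (↥K⟮x₂⟯) := by
    have hn₀ := hgal₂.to_normal
    convert hn₀ using 2
  have hymem₂ : yy ∈ K⟮x₂⟯ := S1Aux.root_mem hint₂ hn₂ hyroot
  have h2 : K⟮yy⟯ = K⟮x₂⟯ := IntermediateField.eq_of_le_of_finrank_eq
    (IntermediateField.adjoin_simple_le_iff.2 hymem₂) (by rw [hfinry, hdeg₂'])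
  constructor
  · convert h1.symm.trans h2 using 2 <;> simp
  · exact ⟨yy, by convert hymem using 2 <;> simp, hyeq⟩


/-- Let `K` be a complete absolutely unramified discrete valuation field of
characteristic `0` with residue characteristic `p` (an odd prime).  Let `a₁, a₂ ∈ K` with
`v_K a₁ = v_K a₂ = -1`, let `x₁, x₂` be roots of `X^p - X - a₁`, `X^p - X - a₂` in a fixed
algebraic closure, and suppose each `K(xᵢ)/K` is cyclic of degree `p`.  If
`v_K (a₁ - a₂) ≥ 1` then `K(x₁) = K(x₂)`; in particular `K(x₁)` contains a root of
`X^p - X - a₂`. -/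
theorem statement1 (p : ℕ) (hp : p.Prime) (hodd : Odd p)
    (K : Type u) [Field K] [CharZero K]
    (V : AddVal K) (hdisc : V.HasIndex 1) (habs : V.v (p : K) = 1) (hcomp : V.IsComplete)
    (a₁ a₂ : K) (ha₁ : V.v a₁ = -1) (ha₂ : V.v a₂ = -1)
    (x₁ x₂ : AlgebraicClosure K)
    (hx₁ : x₁ ^ p - x₁ = algebraMap K (AlgebraicClosure K) a₁)
    (hx₂ : x₂ ^ p - x₂ = algebraMap K (AlgebraicClosure K) a₂)
    (hgal₁ : IsGalois K ↥(IntermediateField.adjoin K {x₁}))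
    (hcyc₁ : IsCyclic (↥(IntermediateField.adjoin K {x₁}) ≃ₐ[K]
      ↥(IntermediateField.adjoin K {x₁})))
    (hdeg₁ : Module.finrank K ↥(IntermediateField.adjoin K {x₁}) = p)
    (hgal₂ : IsGalois K ↥(IntermediateField.adjoin K {x₂}))
    (hcyc₂ : IsCyclic (↥(IntermediateField.adjoin K {x₂}) ≃ₐ[K]
      ↥(IntermediateField.adjoin K {x₂})))
    (hdeg₂ : Module.finrank K ↥(IntermediateField.adjoin K {x₂}) = p)
    (hclose : a₁ = a₂ ∨ 1 ≤ V.v (a₁ - a₂)) :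
    IntermediateField.adjoin K {x₁} = IntermediateField.adjoin K {x₂} ∧
    ∃ y ∈ IntermediateField.adjoin K {x₁},
      y ^ p - y = algebraMap K (AlgebraicClosure K) a₂ :=
  statement1' p hp hodd K V hdisc habs hcomp a₁ a₂ ha₁ ha₂ x₁ x₂ hx₁ hx₂ hgal₂ hdeg₁ hdeg₂
    hclose
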